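/- Adopt the canonical-form data: γ₁ > ⋯ > γ_q nonzero with γ₁ > 0, multiplicities m₁, …, m_q ≥ 1, m₀ ≥ 0, δ = (δ₁, …, δ_q) with δᵢ ≥ 0, ε ≥ 0, and k* ∈ ℝ. Write x = (x₀, x₁, …, x_q) with x₀ ∈ ℝ^{m₀}, xᵢ ∈ ℝ^{mᵢ}, and let P* be the problem of minimising ‖x − t*‖² subject to Σᵢ γᵢ‖xᵢ‖² + 2ε(x₀)₁ = k*, where t* has block components 0 on the x₀ block and δᵢ·u_{mᵢ} on the xᵢ block (u_m the first standard basis vector of ℝ^m). Let P** be the dimension-reduced problem of minimising ‖w − w₀‖² subject to wᵀΔw + 2dᵀw = k*, where, if m₀ > 0, w = (y, z) ∈ ℝ^{1+q}, w₀ = (0, δ), Δ = diag(0, γ₁, …, γ_q), d = ε·e₁, and if m₀ = 0, w = z ∈ ℝ^q, w₀ = δ, Δ = diag(γ₁, …, γ_q), d = 0. Then x̂ = (x̂₀, x̂₁, …, x̂_q) is a global minimiser of P* if and only if there is a global minimiser ŵ = (ŷ, ẑ₁, …, ẑ_q) of P** (the ŷ-component absent when m₀ = 0) such that x̂₀ =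 ŷ·u_{m₀} and, for each i = 1, …, q: x̂ᵢ = ẑᵢ·u_{mᵢ} if δᵢ > 0, and ‖x̂ᵢ‖² = ẑᵢ² if δᵢ = 0. In particular the minimum values of P* and P** coincide. -/

import Mathlib

open Matrix

section Stmt14Aux

private lemma stmt14_L3 {n : ℕ} (hn : 0 < n) (f : Fin n → ℝ) :
    ∑ j : Fin n, (if (j : ℕ) = 0 then f j else 0) = f ⟨0, hn⟩ := by
  have := Finset.sum_ite_eq' (Finset.univ : Finset (Fin n)) (⟨0, hn⟩ : Fin n) f
  simp only [Finset.mem_univ, if_true] at this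
  rw [← this]
  refine Finset.sum_congr rfl fun j _ => ?_
  congr 1
  simp [Fin.ext_iff]

private lemma stmt14_L1 {n : ℕ} (f : Fin n → ℝ) :
    ∑ j : Fin n, (if (j : ℕ) = 0 then f j else 0)
      = ∑ j' : Fin (min n 1), f (Fin.castLE (min_le_left n 1) j') := by
  rcases Nat.eq_zero_or_pos n with h | h
  · subst h
    haveI : IsEmpty (Fin (min 0 1)) := by
      rw [min_eq_left (Nat.zero_le 1)]; infer_instance
    simp
  · have h1 : min n 1 = 1 := min_eq_right h
    haveI : Unique (Fin (min n 1)) := by rw [h1]; infer_instance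
    rw [stmt14_L3 h, Fintype.sum_unique]
    congr 1
    apply Fin.ext
    have h2 : ((default : Fin (min n 1)) : ℕ) < min n 1 := (default : Fin (min n 1)).isLt
    simp only [Fin.coe_castLE]
    omega

private lemma stmt14_LF_id {n : ℕ} (g : Fin (min n 1) → ℝ) :
    ∑ _j' : Fin (min n 1), (∑ j'' : Fin (min n 1), g j'')
      = ∑ j' : Fin (min n 1), g j' := by
  rcases isEmpty_or_nonempty (Fin (min n 1)) with h | h
  · simp
  · have hle : min n 1 ≤ 1 := min_le_right _ _
    haveI : Subsingleton (Fin (min n 1)) := by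
      rcases Nat.le_one_iff_eq_zero_or_eq_one.mp hle with h0 | h1
      · exact absurd h0 (Nat.pos_iff_ne_zero.mp (Fin.pos h.some))
      · rw [h1]; infer_instance
    haveI : Unique (Fin (min n 1)) := uniqueOfSubsingleton h.some
    simp only [Fintype.sum_unique]

private lemma stmt14_LF_sq {n : ℕ} (g : Fin (min n 1) → ℝ) :
    ∑ _j' : Fin (min n 1), (∑ j'' : Fin (min n 1), g j'') ^ 2
      = ∑ j' : Fin (min n 1), (g j') ^ 2 := by
  rcases isEmpty_or_nonempty (Fin (min n 1)) with h | h
  · simp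
  · have hle : min n 1 ≤ 1 := min_le_right _ _
    haveI : Subsingleton (Fin (min n 1)) := by
      rcases Nat.le_one_iff_eq_zero_or_eq_one.mp hle with h0 | h1
      · exact absurd h0 (Nat.pos_iff_ne_zero.mp (Fin.pos h.some))
      · rw [h1]; infer_instance
    haveI : Unique (Fin (min n 1)) := uniqueOfSubsingleton h.some
    simp only [Fintype.sum_unique]

end Stmt14Aux

theorem stmt14 {m0 q : ℕ} (hq : 0 < q) (m : Fin q → ℕ) (hm : ∀ i, 1 ≤ m i)
    (γ : Fin q → ℝ) (hanti : StrictAnti γ) (hne : ∀ i, γ i ≠ 0)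
    (hpos : 0 < γ ⟨0, hq⟩)
    (δ : Fin q → ℝ) (hδ : ∀ i, 0 ≤ δ i) (ε : ℝ) (hε : 0 ≤ ε) (kstar : ℝ) :
    let tstar : Fin m0 ⊕ ((i : Fin q) × Fin (m i)) → ℝ :=
      Sum.elim (fun _ => (0 : ℝ))
        (fun p : (i : Fin q) × Fin (m i) => if (p.2 : ℕ) = 0 then δ p.1 else 0)
    let Ls : (Fin m0 ⊕ ((i : Fin q) × Fin (m i)) → ℝ) → ℝ :=
      fun x => (x - tstar) ⬝ᵥ (x - tstar)
    let Xs : Set (Fin m0 ⊕ ((i : Fin q) × Fin (m i)) → ℝ) :=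
      {x | (∑ p : (i : Fin q) × Fin (m i), γ p.1 * (x (Sum.inr p)) ^ 2)
            + 2 * ε * (∑ j : Fin m0, if (j : ℕ) = 0 then x (Sum.inl j) else 0) = kstar}
    let Δ : Matrix (Fin (min m0 1) ⊕ Fin q) (Fin (min m0 1) ⊕ Fin q) ℝ :=
      Matrix.diagonal (Sum.elim (fun _ => (0 : ℝ)) γ)
    let d : Fin (min m0 1) ⊕ Fin q → ℝ := Sum.elim (fun _ => ε) (fun _ => 0)
    let w0 : Fin (min m0 1) ⊕ Fin q → ℝ := Sum.elim (fun _ => (0 : ℝ)) δ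
    let W : Set (Fin (min m0 1) ⊕ Fin q → ℝ) :=
      {w | w ⬝ᵥ Δ.mulVec w + 2 * (d ⬝ᵥ w) = kstar}
    let Lw : (Fin (min m0 1) ⊕ Fin q → ℝ) → ℝ := fun w => (w - w0) ⬝ᵥ (w - w0)
    Xs.Nonempty → W.Nonempty →
      (∀ xh : Fin m0 ⊕ ((i : Fin q) × Fin (m i)) → ℝ,
        (xh ∈ Xs ∧ ∀ x ∈ Xs, Ls xh ≤ Ls x) ↔
        (∃ wh : Fin (min m0 1) ⊕ Fin q → ℝ,
          (wh ∈ W ∧ ∀ w ∈ W, Lw wh ≤ Lw w) ∧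
          (∀ j : Fin m0, xh (Sum.inl j)
              = if (j : ℕ) = 0 then (∑ j' : Fin (min m0 1), wh (Sum.inl j')) else 0) ∧
          (∀ i : Fin q,
            (0 < δ i → ∀ jj : Fin (m i),
              xh (Sum.inr ⟨i, jj⟩) = if (jj : ℕ) = 0 then wh (Sum.inr i) else 0) ∧
            (δ i = 0 →
              (∑ jj : Fin (m i), (xh (Sum.inr ⟨i, jj⟩)) ^ 2) = (wh (Sum.inr i)) ^ 2)))) ∧
      sInf (Ls '' Xs) = sInf (Lw '' W) := by
  intro tstar Ls Xs Δ d w0 W Lw hXne hWne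
  classical
  have hsig : ∀ (f : (i : Fin q) × Fin (m i) → ℝ),
      (∑ p : (i : Fin q) × Fin (m i), f p) = ∑ i : Fin q, ∑ jj : Fin (m i), f ⟨i, jj⟩ := by
    intro f
    rw [← Finset.univ_sigma_univ, Finset.sum_sigma]
  -- expanded objective for P*
  have hLs : ∀ x, Ls x =
      (∑ j : Fin m0, (x (Sum.inl j)) ^ 2)
        + ∑ i : Fin q, ∑ jj : Fin (m i),
            (x (Sum.inr ⟨i, jj⟩) - (if (jj : ℕ) = 0 then δ i else 0)) ^ 2 := by
    intro x
    show (x - tstar) ⬝ᵥ (x - tstar) = _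
    simp only [dotProduct, Fintype.sum_sum_type, Pi.sub_apply, tstar, Sum.elim_inl,
      Sum.elim_inr, sub_zero]
    rw [hsig]
    congr 1
    · exact Finset.sum_congr rfl fun j _ => (sq (x (Sum.inl j))).symm
    · exact Finset.sum_congr rfl fun i _ => Finset.sum_congr rfl fun jj _ => (sq _).symm
  -- expanded objective for P**
  have hLw : ∀ w, Lw w =
      (∑ j' : Fin (min m0 1), (w (Sum.inl j')) ^ 2)
        + ∑ i : Fin q, (w (Sum.inr i) - δ i) ^ 2 := by
    intro w
    show (w - w0) ⬝ᵥ (w - w0) = _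
    simp only [dotProduct, Fintype.sum_sum_type, Pi.sub_apply, w0, Sum.elim_inl,
      Sum.elim_inr, sub_zero]
    congr 1
    · exact Finset.sum_congr rfl fun j _ => (sq _).symm
    · exact Finset.sum_congr rfl fun i _ => (sq _).symm
  -- membership criteria
  have hWmem : ∀ w, w ∈ W ↔
      (∑ i : Fin q, γ i * (w (Sum.inr i)) ^ 2)
        + 2 * ε * (∑ j' : Fin (min m0 1), w (Sum.inl j')) = kstar := by
    intro w
    show w ⬝ᵥ Δ.mulVec w + 2 * (d ⬝ᵥ w) = kstar ↔ _
    have : w ⬝ᵥ Δ.mulVec w + 2 * (d ⬝ᵥ w)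
        = (∑ i : Fin q, γ i * (w (Sum.inr i)) ^ 2)
          + 2 * ε * (∑ j' : Fin (min m0 1), w (Sum.inl j')) := by
      simp only [dotProduct, Matrix.mulVec_diagonal, Fintype.sum_sum_type, Δ, d,
        Sum.elim_inl, Sum.elim_inr, zero_mul, mul_zero, Finset.sum_const_zero,
        zero_add, add_zero]
      congr 1
      · exact Finset.sum_congr rfl fun i _ => by ring
      · rw [mul_assoc]
        exact congrArg (fun t => 2 * t) (Finset.mul_sum _ _ _).symm
    rw [this]
  have hXmem : ∀ x, x ∈ Xs ↔
      (∑ i : Fin q, γ i * ∑ jj : Fin (m i), (x (Sum.inr ⟨i, jj⟩)) ^ 2)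
        + 2 * ε * (∑ j : Fin m0, if (j : ℕ) = 0 then x (Sum.inl j) else 0) = kstar := by
    intro x
    show _ + _ = kstar ↔ _
    rw [hsig]
    constructor <;> intro h <;>
      [skip; skip] <;>
      · rw [show (∑ i : Fin q, ∑ jj : Fin (m i), γ i * (x (Sum.inr ⟨i, jj⟩)) ^ 2)
            = ∑ i : Fin q, γ i * ∑ jj : Fin (m i), (x (Sum.inr ⟨i, jj⟩)) ^ 2 from
            Finset.sum_congr rfl fun i _ => (Finset.mul_sum _ _ _).symm] at *
        linarith [h]
  -- the embedding Φ : P** variables → P* variables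
  set Φ : (Fin (min m0 1) ⊕ Fin q → ℝ) → (Fin m0 ⊕ ((i : Fin q) × Fin (m i)) → ℝ) :=
    fun w => Sum.elim
      (fun j : Fin m0 =>
        if (j : ℕ) = 0 then (∑ j' : Fin (min m0 1), w (Sum.inl j')) else 0)
      (fun p : (i : Fin q) × Fin (m i) =>
        if (p.2 : ℕ) = 0 then w (Sum.inr p.1) else 0) with hΦdef
  set Ψ : (Fin m0 ⊕ ((i : Fin q) × Fin (m i)) → ℝ) → (Fin (min m0 1) ⊕ Fin q → ℝ) :=
    fun x => Sum.elim
      (fun j' : Fin (min m0 1) => x (Sum.inl (Fin.castLE (min_le_left m0 1) j')))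
      (fun i : Fin q =>
        Real.sqrt (∑ jj : Fin (m i), (x (Sum.inr ⟨i, jj⟩)) ^ 2)) with hΨdef
  have hΦinl : ∀ w (j : Fin m0), Φ w (Sum.inl j)
      = if (j : ℕ) = 0 then (∑ j' : Fin (min m0 1), w (Sum.inl j')) else 0 :=
    fun _ _ => rfl
  have hΦinr : ∀ w (p : (i : Fin q) × Fin (m i)), Φ w (Sum.inr p)
      = if (p.2 : ℕ) = 0 then w (Sum.inr p.1) else 0 := fun _ _ => rfl
  have hΨinl : ∀ x (j' : Fin (min m0 1)), Ψ x (Sum.inl j')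
      = x (Sum.inl (Fin.castLE (min_le_left m0 1) j')) := fun _ _ => rfl
  have hΨinr : ∀ x (i : Fin q), Ψ x (Sum.inr i)
      = Real.sqrt (∑ jj : Fin (m i), (x (Sum.inr ⟨i, jj⟩)) ^ 2) := fun _ _ => rfl
  -- values under Φ
  have keyΦval : ∀ w, Ls (Φ w) = Lw w := by
    intro w
    rw [hLs, hLw]
    congr 1
    · have e1 : ∀ j : Fin m0, (Φ w (Sum.inl j)) ^ 2
          = if (j : ℕ) = 0 then (∑ j' : Fin (min m0 1), w (Sum.inl j')) ^ 2 else 0 := by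
        intro j; rw [hΦinl]; by_cases hj : (j : ℕ) = 0 <;> simp [hj]
      rw [Finset.sum_congr rfl fun j _ => e1 j, stmt14_L1]
      exact stmt14_LF_sq (fun j'' => w (Sum.inl j''))
    · refine Finset.sum_congr rfl fun i _ => ?_
      have e2 : ∀ jj : Fin (m i),
          (Φ w (Sum.inr ⟨i, jj⟩) - (if (jj : ℕ) = 0 then δ i else 0)) ^ 2
            = if (jj : ℕ) = 0 then (w (Sum.inr i) - δ i) ^ 2 else 0 := by
        intro jj; rw [hΦinr]; by_cases hj : (jj : ℕ) = 0 <;> simp [hj]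
      rw [Finset.sum_congr rfl fun jj _ => e2 jj, stmt14_L3 (hm i)]
  have keyΦmem : ∀ w ∈ W, Φ w ∈ Xs := by
    intro w hw
    rw [hWmem] at hw
    rw [hXmem]
    have e3 : ∀ i : Fin q, (∑ jj : Fin (m i), (Φ w (Sum.inr ⟨i, jj⟩)) ^ 2)
        = (w (Sum.inr i)) ^ 2 := by
      intro i
      have e3' : ∀ jj : Fin (m i), (Φ w (Sum.inr ⟨i, jj⟩)) ^ 2
          = if (jj : ℕ) = 0 then (w (Sum.inr i)) ^ 2 else 0 := by
        intro jj; rw [hΦinr]; by_cases hj : (jj : ℕ) = 0 <;> simp [hj]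
      rw [Finset.sum_congr rfl fun jj _ => e3' jj, stmt14_L3 (hm i)]
    have e4 : (∑ j : Fin m0, if (j : ℕ) = 0 then Φ w (Sum.inl j) else 0)
        = ∑ j' : Fin (min m0 1), w (Sum.inl j') := by
      have e4' : ∀ j : Fin m0, (if (j : ℕ) = 0 then Φ w (Sum.inl j) else 0)
          = if (j : ℕ) = 0 then (∑ j'' : Fin (min m0 1), w (Sum.inl j'')) else 0 := by
        intro j; rw [hΦinl]; by_cases hj : (j : ℕ) = 0 <;> simp [hj]
      rw [Finset.sum_congr rfl fun j _ => e4' j, stmt14_L1]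
      exact stmt14_LF_id (fun j'' => w (Sum.inl j''))
    have e5 : (∑ i : Fin q, γ i * ∑ jj : Fin (m i), (Φ w (Sum.inr ⟨i, jj⟩)) ^ 2)
        = ∑ i : Fin q, γ i * (w (Sum.inr i)) ^ 2 :=
      Finset.sum_congr rfl fun i _ => by rw [e3 i]
    rw [e5, e4]; exact hw
  have keyΨmem : ∀ x ∈ Xs, Ψ x ∈ W := by
    intro x hx
    rw [hXmem] at hx
    rw [hWmem]
    have e6 : ∀ i : Fin q, (Ψ x (Sum.inr i)) ^ 2
        = ∑ jj : Fin (m i), (x (Sum.inr ⟨i, jj⟩)) ^ 2 := by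
      intro i
      rw [hΨinr]
      exact Real.sq_sqrt (Finset.sum_nonneg fun jj _ => sq_nonneg _)
    have e7 : (∑ j' : Fin (min m0 1), Ψ x (Sum.inl j'))
        = ∑ j : Fin m0, if (j : ℕ) = 0 then x (Sum.inl j) else 0 := by
      rw [stmt14_L1 (fun j => x (Sum.inl j))]
      rfl
    have e8 : (∑ i : Fin q, γ i * (Ψ x (Sum.inr i)) ^ 2)
        = ∑ i : Fin q, γ i * ∑ jj : Fin (m i), (x (Sum.inr ⟨i, jj⟩)) ^ 2 :=
      Finset.sum_congr rfl fun i _ => by rw [e6 i]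
    rw [e8, e7]; exact hx
  -- first coordinate bounded by sqrt of block sum of squares
  have habs : ∀ (x : Fin m0 ⊕ ((i : Fin q) × Fin (m i)) → ℝ) (i : Fin q),
      x (Sum.inr ⟨i, ⟨0, hm i⟩⟩)
        ≤ Real.sqrt (∑ jj : Fin (m i), (x (Sum.inr ⟨i, jj⟩)) ^ 2) := by
    intro x i
    have h1 : (x (Sum.inr ⟨i, ⟨0, hm i⟩⟩)) ^ 2
        ≤ ∑ jj : Fin (m i), (x (Sum.inr ⟨i, jj⟩)) ^ 2 :=
      Finset.single_le_sum (f := fun jj : Fin (m i) => (x (Sum.inr ⟨i, jj⟩)) ^ 2)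
        (fun jj _ => sq_nonneg _) (Finset.mem_univ (⟨0, hm i⟩ : Fin (m i)))
    calc x (Sum.inr ⟨i, ⟨0, hm i⟩⟩) ≤ |x (Sum.inr ⟨i, ⟨0, hm i⟩⟩)| := le_abs_self _
      _ = Real.sqrt ((x (Sum.inr ⟨i, ⟨0, hm i⟩⟩)) ^ 2) := (Real.sqrt_sq_eq_abs _).symm
      _ ≤ _ := Real.sqrt_le_sqrt h1
  -- expansion of a block of the objective
  have hblock : ∀ (x : Fin m0 ⊕ ((i : Fin q) × Fin (m i)) → ℝ) (i : Fin q),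
      (∑ jj : Fin (m i), (x (Sum.inr ⟨i, jj⟩) - (if (jj : ℕ) = 0 then δ i else 0)) ^ 2)
        = (∑ jj : Fin (m i), (x (Sum.inr ⟨i, jj⟩)) ^ 2)
          - 2 * δ i * x (Sum.inr ⟨i, ⟨0, hm i⟩⟩) + (δ i) ^ 2 := by
    intro x i
    have hb : ∀ jj : Fin (m i),
        (x (Sum.inr ⟨i, jj⟩) - (if (jj : ℕ) = 0 then δ i else 0)) ^ 2
          = (x (Sum.inr ⟨i, jj⟩)) ^ 2
            - (if (jj : ℕ) = 0 then 2 * δ i * x (Sum.inr ⟨i, jj⟩) else 0)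
            + (if (jj : ℕ) = 0 then (δ i) ^ 2 else 0) := by
      intro jj; by_cases hj : (jj : ℕ) = 0 <;> simp [hj] <;> ring
    rw [Finset.sum_congr rfl fun jj _ => hb jj, Finset.sum_add_distrib,
      Finset.sum_sub_distrib, stmt14_L3 (hm i), stmt14_L3 (hm i)]
  have keyΨle : ∀ x, Lw (Ψ x) ≤ Ls x := by
    intro x
    rw [hLs, hLw]
    have hinl : (∑ j' : Fin (min m0 1), (Ψ x (Sum.inl j')) ^ 2)
        ≤ ∑ j : Fin m0, (x (Sum.inl j)) ^ 2 := by
      have hi : (∑ j' : Fin (min m0 1), (Ψ x (Sum.inl j')) ^ 2)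
          = ∑ j : Fin m0, if (j : ℕ) = 0 then (x (Sum.inl j)) ^ 2 else 0 := by
        rw [stmt14_L1 (fun j => (x (Sum.inl j)) ^ 2)]; rfl
      rw [hi]
      refine Finset.sum_le_sum fun j _ => ?_
      by_cases hj : (j : ℕ) = 0 <;> simp [hj, sq_nonneg]
    have hinr : ∀ i : Fin q, (Ψ x (Sum.inr i) - δ i) ^ 2
        ≤ ∑ jj : Fin (m i),
            (x (Sum.inr ⟨i, jj⟩) - (if (jj : ℕ) = 0 then δ i else 0)) ^ 2 := by
      intro i
      rw [hblock x i, hΨinr]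
      have hs0 : 0 ≤ ∑ jj : Fin (m i), (x (Sum.inr ⟨i, jj⟩)) ^ 2 :=
        Finset.sum_nonneg fun jj _ => sq_nonneg _
      have hsq : Real.sqrt (∑ jj : Fin (m i), (x (Sum.inr ⟨i, jj⟩)) ^ 2) ^ 2
          = ∑ jj : Fin (m i), (x (Sum.inr ⟨i, jj⟩)) ^ 2 := Real.sq_sqrt hs0
      have h2 := habs x i
      have h3 : δ i * x (Sum.inr ⟨i, ⟨0, hm i⟩⟩)
          ≤ δ i * Real.sqrt (∑ jj : Fin (m i), (x (Sum.inr ⟨i, jj⟩)) ^ 2) :=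
        mul_le_mul_of_nonneg_left h2 (hδ i)
      nlinarith [h3, hsq]
    exact add_le_add hinl (Finset.sum_le_sum fun i _ => hinr i)
  -- nonnegativity / bounded below
  have hLs0 : ∀ x, 0 ≤ Ls x := by
    intro x; rw [hLs]
    exact add_nonneg (Finset.sum_nonneg fun _ _ => sq_nonneg _)
      (Finset.sum_nonneg fun _ _ => Finset.sum_nonneg fun _ _ => sq_nonneg _)
  have hLw0 : ∀ w, 0 ≤ Lw w := by
    intro w; rw [hLw]
    exact add_nonneg (Finset.sum_nonneg fun _ _ => sq_nonneg _)
      (Finset.sum_nonneg fun _ _ => sq_nonneg _)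
  have hBX : BddBelow (Ls '' Xs) := by
    refine ⟨0, fun b hb => ?_⟩
    obtain ⟨x, _, rfl⟩ := hb; exact hLs0 x
  have hBW : BddBelow (Lw '' W) := by
    refine ⟨0, fun b hb => ?_⟩
    obtain ⟨w, _, rfl⟩ := hb; exact hLw0 w
  constructor
  · intro xh
    constructor
    · rintro ⟨hxh, hminx⟩
      have hΨW := keyΨmem xh hxh
      have h1 : Lw (Ψ xh) ≤ Ls xh := keyΨle xh
      have h2 : Ls xh ≤ Lw (Ψ xh) := by
        have := hminx (Φ (Ψ xh)) (keyΦmem _ hΨW)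
        rwa [keyΦval] at this
      have heq : Ls xh = Lw (Ψ xh) := le_antisymm h2 h1
      have eLs : Ls xh = (∑ j : Fin m0, (xh (Sum.inl j)) ^ 2)
          + ∑ i : Fin q, ((∑ jj : Fin (m i), (xh (Sum.inr ⟨i, jj⟩)) ^ 2)
            - 2 * δ i * xh (Sum.inr ⟨i, ⟨0, hm i⟩⟩) + (δ i) ^ 2) := by
        rw [hLs]
        exact congrArg _ (Finset.sum_congr rfl fun i _ => hblock xh i)
      have eLw : Lw (Ψ xh)
          = (∑ j : Fin m0, if (j : ℕ) = 0 then (xh (Sum.inl j)) ^ 2 else 0)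
            + ∑ i : Fin q, ((∑ jj : Fin (m i), (xh (Sum.inr ⟨i, jj⟩)) ^ 2)
              - 2 * δ i * Real.sqrt (∑ jj : Fin (m i), (xh (Sum.inr ⟨i, jj⟩)) ^ 2)
              + (δ i) ^ 2) := by
        rw [hLw]
        congr 1
        · rw [stmt14_L1 (fun j => (xh (Sum.inl j)) ^ 2)]; rfl
        · refine Finset.sum_congr rfl fun i _ => ?_
          rw [hΨinr]
          have hs0 : (0:ℝ) ≤ ∑ jj : Fin (m i), (xh (Sum.inr ⟨i, jj⟩)) ^ 2 :=
            Finset.sum_nonneg fun jj _ => sq_nonneg _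
          rw [sub_sq, Real.sq_sqrt hs0]; ring
      have esplit : ∀ j : Fin m0, (xh (Sum.inl j)) ^ 2
          = (if (j : ℕ) = 0 then (xh (Sum.inl j)) ^ 2 else 0)
            + (if (j : ℕ) = 0 then 0 else (xh (Sum.inl j)) ^ 2) := by
        intro j; by_cases hj : (j : ℕ) = 0 <;> simp [hj]
      have hA : (∑ j : Fin m0, (xh (Sum.inl j)) ^ 2)
          = (∑ j : Fin m0, if (j : ℕ) = 0 then (xh (Sum.inl j)) ^ 2 else 0)
            + ∑ j : Fin m0, if (j : ℕ) = 0 then 0 else (xh (Sum.inl j)) ^ 2 := by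
        rw [← Finset.sum_add_distrib]
        exact Finset.sum_congr rfl fun j _ => esplit j
      have hB : (∑ i : Fin q, ((∑ jj : Fin (m i), (xh (Sum.inr ⟨i, jj⟩)) ^ 2)
            - 2 * δ i * xh (Sum.inr ⟨i, ⟨0, hm i⟩⟩) + (δ i) ^ 2))
          = (∑ i : Fin q, ((∑ jj : Fin (m i), (xh (Sum.inr ⟨i, jj⟩)) ^ 2)
              - 2 * δ i * Real.sqrt (∑ jj : Fin (m i), (xh (Sum.inr ⟨i, jj⟩)) ^ 2)
              + (δ i) ^ 2))
            + ∑ i : Fin q, 2 * δ i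
                * (Real.sqrt (∑ jj : Fin (m i), (xh (Sum.inr ⟨i, jj⟩)) ^ 2)
                  - xh (Sum.inr ⟨i, ⟨0, hm i⟩⟩)) := by
        rw [← Finset.sum_add_distrib]
        exact Finset.sum_congr rfl fun i _ => by ring
      have hdiff : (∑ j : Fin m0, if (j : ℕ) = 0 then 0 else (xh (Sum.inl j)) ^ 2)
          + (∑ i : Fin q, 2 * δ i
              * (Real.sqrt (∑ jj : Fin (m i), (xh (Sum.inr ⟨i, jj⟩)) ^ 2)
                - xh (Sum.inr ⟨i, ⟨0, hm i⟩⟩))) = 0 := by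
        rw [eLs, eLw] at heq
        linarith [heq, hA, hB]
      have hterm1 : ∀ j : Fin m0,
          (0:ℝ) ≤ if (j : ℕ) = 0 then 0 else (xh (Sum.inl j)) ^ 2 := by
        intro j; by_cases hj : (j : ℕ) = 0 <;> simp [hj, sq_nonneg]
      have hterm2 : ∀ i : Fin q, (0:ℝ) ≤ 2 * δ i
          * (Real.sqrt (∑ jj : Fin (m i), (xh (Sum.inr ⟨i, jj⟩)) ^ 2)
            - xh (Sum.inr ⟨i, ⟨0, hm i⟩⟩)) := by
        intro i
        have h4 := habs xh i
        have h5 := hδ i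
        nlinarith [h4, h5]
      have hsz1 : (∑ j : Fin m0, if (j : ℕ) = 0 then 0 else (xh (Sum.inl j)) ^ 2) = 0 := by
        have hn1 : 0 ≤ ∑ j : Fin m0, if (j : ℕ) = 0 then 0 else (xh (Sum.inl j)) ^ 2 :=
          Finset.sum_nonneg fun j _ => hterm1 j
        have hn2 : 0 ≤ ∑ i : Fin q, 2 * δ i
            * (Real.sqrt (∑ jj : Fin (m i), (xh (Sum.inr ⟨i, jj⟩)) ^ 2)
              - xh (Sum.inr ⟨i, ⟨0, hm i⟩⟩)) :=
          Finset.sum_nonneg fun i _ => hterm2 i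
        linarith
      have hsz2 : (∑ i : Fin q, 2 * δ i
          * (Real.sqrt (∑ jj : Fin (m i), (xh (Sum.inr ⟨i, jj⟩)) ^ 2)
            - xh (Sum.inr ⟨i, ⟨0, hm i⟩⟩))) = 0 := by
        have hn1 : 0 ≤ ∑ j : Fin m0, if (j : ℕ) = 0 then 0 else (xh (Sum.inl j)) ^ 2 :=
          Finset.sum_nonneg fun j _ => hterm1 j
        have hn2 : 0 ≤ ∑ i : Fin q, 2 * δ i
            * (Real.sqrt (∑ jj : Fin (m i), (xh (Sum.inr ⟨i, jj⟩)) ^ 2)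
              - xh (Sum.inr ⟨i, ⟨0, hm i⟩⟩)) :=
          Finset.sum_nonneg fun i _ => hterm2 i
        linarith
      have hz1 : ∀ j : Fin m0, (if (j : ℕ) = 0 then 0 else (xh (Sum.inl j)) ^ 2) = 0 :=
        fun j => (Finset.sum_eq_zero_iff_of_nonneg (fun j _ => hterm1 j)).mp hsz1 j
          (Finset.mem_univ j)
      have hz2 : ∀ i : Fin q, 2 * δ i
          * (Real.sqrt (∑ jj : Fin (m i), (xh (Sum.inr ⟨i, jj⟩)) ^ 2)
            - xh (Sum.inr ⟨i, ⟨0, hm i⟩⟩)) = 0 :=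
        fun i => (Finset.sum_eq_zero_iff_of_nonneg (fun i _ => hterm2 i)).mp hsz2 i
          (Finset.mem_univ i)
      refine ⟨Ψ xh, ⟨⟨hΨW, ?_⟩, ?_, ?_⟩⟩
      · intro w hw
        calc Lw (Ψ xh) = Ls xh := heq.symm
          _ ≤ Ls (Φ w) := hminx (Φ w) (keyΦmem w hw)
          _ = Lw w := keyΦval w
      · intro j
        have hsum : (∑ j' : Fin (min m0 1), Ψ xh (Sum.inl j'))
            = ∑ j'' : Fin m0, if (j'' : ℕ) = 0 then xh (Sum.inl j'') else 0 := by
          rw [stmt14_L1 (fun j => xh (Sum.inl j))]; rfl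
        by_cases hj : (j : ℕ) = 0
        · rw [if_pos hj, hsum, stmt14_L3 (Fin.pos j) (fun j'' => xh (Sum.inl j''))]
          have : j = ⟨0, Fin.pos j⟩ := Fin.ext hj
          rw [← this]
        · rw [if_neg hj]
          have h6 := hz1 j
          rw [if_neg hj] at h6
          exact sq_eq_zero_iff.mp h6
      · intro i
        have hs0 : (0:ℝ) ≤ ∑ jj : Fin (m i), (xh (Sum.inr ⟨i, jj⟩)) ^ 2 :=
          Finset.sum_nonneg fun jj _ => sq_nonneg _
        constructor
        · intro hδi jj
          have h0 := hz2 i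
          have h2δ : (2 * δ i) ≠ 0 := by positivity
          have ha : Real.sqrt (∑ jj' : Fin (m i), (xh (Sum.inr ⟨i, jj'⟩)) ^ 2)
              = xh (Sum.inr ⟨i, ⟨0, hm i⟩⟩) :=
            sub_eq_zero.mp ((mul_eq_zero.mp h0).resolve_left h2δ)
          have ha2 : (xh (Sum.inr ⟨i, ⟨0, hm i⟩⟩)) ^ 2
              = ∑ jj' : Fin (m i), (xh (Sum.inr ⟨i, jj'⟩)) ^ 2 := by
            rw [← ha]; exact Real.sq_sqrt hs0
          have hsplitq : (∑ jj' : Fin (m i), (xh (Sum.inr ⟨i, jj'⟩)) ^ 2)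
              = (xh (Sum.inr ⟨i, ⟨0, hm i⟩⟩)) ^ 2
                + ∑ jj' : Fin (m i),
                    if (jj' : ℕ) = 0 then 0 else (xh (Sum.inr ⟨i, jj'⟩)) ^ 2 := by
            have hsp : ∀ jj' : Fin (m i), (xh (Sum.inr ⟨i, jj'⟩)) ^ 2
                = (if (jj' : ℕ) = 0 then (xh (Sum.inr ⟨i, jj'⟩)) ^ 2 else 0)
                  + (if (jj' : ℕ) = 0 then 0 else (xh (Sum.inr ⟨i, jj'⟩)) ^ 2) := by
              intro jj'; by_cases hj : (jj' : ℕ) = 0 <;> simp [hj]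
            rw [Finset.sum_congr rfl fun jj' _ => hsp jj', Finset.sum_add_distrib,
              stmt14_L3 (hm i) (fun jj' => (xh (Sum.inr ⟨i, jj'⟩)) ^ 2)]
          have hrest : (∑ jj' : Fin (m i),
              if (jj' : ℕ) = 0 then 0 else (xh (Sum.inr ⟨i, jj'⟩)) ^ 2) = 0 := by
            linarith [hsplitq, ha2]
          by_cases hj : (jj : ℕ) = 0
          · have hjj : jj = ⟨0, hm i⟩ := Fin.ext hj
            rw [if_pos hj, hjj, hΨinr, ha]
          · rw [if_neg hj]
            have h7 := (Finset.sum_eq_zero_iff_of_nonneg (fun jj' _ => by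
              by_cases hj' : (jj' : ℕ) = 0 <;> simp [hj', sq_nonneg])).mp hrest jj
              (Finset.mem_univ jj)
            rw [if_neg hj] at h7
            exact sq_eq_zero_iff.mp h7
        · intro _
          rw [hΨinr, Real.sq_sqrt hs0]
    · rintro ⟨wh, ⟨hwhW, hwhmin⟩, hrel0, hrelq⟩
      have hLseq : Ls xh = Lw wh := by
        rw [hLs, hLw]
        congr 1
        · have hr : ∀ j : Fin m0, (xh (Sum.inl j)) ^ 2
              = if (j : ℕ) = 0 then (∑ j' : Fin (min m0 1), wh (Sum.inl j')) ^ 2 else 0 := by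
            intro j; rw [hrel0 j]; by_cases hj : (j : ℕ) = 0 <;> simp [hj]
          rw [Finset.sum_congr rfl fun j _ => hr j, stmt14_L1]
          exact stmt14_LF_sq (fun j'' => wh (Sum.inl j''))
        · refine Finset.sum_congr rfl fun i _ => ?_
          rcases (hδ i).eq_or_lt with hδ0 | hδpos
          · have h0 : δ i = 0 := hδ0.symm
            have hq2 := (hrelq i).2 h0
            have hr : ∀ jj : Fin (m i),
                (xh (Sum.inr ⟨i, jj⟩) - (if (jj : ℕ) = 0 then δ i else 0)) ^ 2
                  = (xh (Sum.inr ⟨i, jj⟩)) ^ 2 := by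
              intro jj; by_cases hj : (jj : ℕ) = 0 <;> simp [hj, h0]
            rw [Finset.sum_congr rfl fun jj _ => hr jj, hq2, h0, sub_zero]
          · have hq1 := (hrelq i).1 hδpos
            have hr : ∀ jj : Fin (m i),
                (xh (Sum.inr ⟨i, jj⟩) - (if (jj : ℕ) = 0 then δ i else 0)) ^ 2
                  = if (jj : ℕ) = 0 then (wh (Sum.inr i) - δ i) ^ 2 else 0 := by
              intro jj; rw [hq1 jj]; by_cases hj : (jj : ℕ) = 0 <;> simp [hj]
            rw [Finset.sum_congr rfl fun jj _ => hr jj, stmt14_L3 (hm i)]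
      have hxhXs : xh ∈ Xs := by
        rw [hXmem]
        rw [hWmem] at hwhW
        have e9 : ∀ i : Fin q, (∑ jj : Fin (m i), (xh (Sum.inr ⟨i, jj⟩)) ^ 2)
            = (wh (Sum.inr i)) ^ 2 := by
          intro i
          rcases (hδ i).eq_or_lt with hδ0 | hδpos
          · exact (hrelq i).2 hδ0.symm
          · have hq1 := (hrelq i).1 hδpos
            have hr : ∀ jj : Fin (m i), (xh (Sum.inr ⟨i, jj⟩)) ^ 2
                = if (jj : ℕ) = 0 then (wh (Sum.inr i)) ^ 2 else 0 := by
              intro jj; rw [hq1 jj]; by_cases hj : (jj : ℕ) = 0 <;> simp [hj]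
            rw [Finset.sum_congr rfl fun jj _ => hr jj, stmt14_L3 (hm i)]
        have e10 : (∑ j : Fin m0, if (j : ℕ) = 0 then xh (Sum.inl j) else 0)
            = ∑ j' : Fin (min m0 1), wh (Sum.inl j') := by
          have hr : ∀ j : Fin m0, (if (j : ℕ) = 0 then xh (Sum.inl j) else 0)
              = if (j : ℕ) = 0 then (∑ j'' : Fin (min m0 1), wh (Sum.inl j'')) else 0 := by
            intro j; rw [hrel0 j]; by_cases hj : (j : ℕ) = 0 <;> simp [hj]
          rw [Finset.sum_congr rfl fun j _ => hr j, stmt14_L1]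
          exact stmt14_LF_id (fun j'' => wh (Sum.inl j''))
        have e11 : (∑ i : Fin q, γ i * ∑ jj : Fin (m i), (xh (Sum.inr ⟨i, jj⟩)) ^ 2)
            = ∑ i : Fin q, γ i * (wh (Sum.inr i)) ^ 2 :=
          Finset.sum_congr rfl fun i _ => by rw [e9 i]
        rw [e11, e10]; exact hwhW
      refine ⟨hxhXs, fun x hx => ?_⟩
      calc Ls xh = Lw wh := hLseq
        _ ≤ Lw (Ψ x) := hwhmin (Ψ x) (keyΨmem x hx)
        _ ≤ Ls x := keyΨle x
  · apply le_antisymm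
    · refine le_csInf (hWne.image _) ?_
      rintro b ⟨w, hw, rfl⟩
      calc sInf (Ls '' Xs) ≤ Ls (Φ w) := csInf_le hBX ⟨Φ w, keyΦmem w hw, rfl⟩
        _ = Lw w := keyΦval w
    · refine le_csInf (hXne.image _) ?_
      rintro b ⟨x, hx, rfl⟩
      calc sInf (Lw '' W) ≤ Lw (Ψ x) := csInf_le hBW ⟨Ψ x, keyΨmem x hx, rfl⟩
        _ ≤ Ls x := keyΨle x
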